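/- For m ≥ 2 and λ = (m, m, ..., m, 0) ⊢ m(m−1) (with m−1 parts equal to m), the λ-permutohedron P_λ^m has a unique interior lattice point (m−1,...,m−1), and this point is lattice distance 1 from each facet; hence P_λ^m is reflexive. -/

import Mathlib

/-- The `λ`-permutohedron `P_λ^m ⊂ ℝ^m`: the convex hull of all coordinate
permutations of the vector `(λ_1, ..., λ_m)`. -/
def permPoly (m : ℕ) (lam : Fin m → ℕ) : Set (Fin m → ℝ) :=
  convexHull ℝ {x : Fin m → ℝ | ∃ σ : Equiv.Perm (Fin m), x = fun i => (lam (σ i) : ℝ)}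

/-- A (possibly lower-dimensional) lattice polytope `P` is reflexive with respect to the
lattice point `p` if: `p` lies in the relative (intrinsic) interior of `P`, it is the
unique lattice point there, and `p` is at lattice distance 1 from every facet of `P`,
i.e. for every facet (an exposed face of dimension `dim P − 1`, exposed by a linear
functional `f`) there is no lattice point of the affine span of `P` whose `f`-value lies
strictly between `f p` and the value of `f` on the facet. -/
def ReflexivePolytope (m : ℕ) (P : Set (Fin m → ℝ)) (p : Fin m → ℤ) : Prop :=
  (fun i => (p i : ℝ)) ∈ intrinsicInterior ℝ P ∧
  (∀ q : Fin m → ℤ, (fun i => (q i : ℝ)) ∈ intrinsicInterior ℝ P → q = p) ∧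
  ∀ (f : (Fin m → ℝ) →ₗ[ℝ] ℝ) (F : Set (Fin m → ℝ)), F.Nonempty →
    F = {x ∈ P | ∀ y ∈ P, f y ≤ f x} →
    Module.finrank ℝ ↥(vectorSpan ℝ F) + 1 = Module.finrank ℝ ↥(vectorSpan ℝ P) →
    ∀ x ∈ F, ∀ z : Fin m → ℤ,
      (fun i => (z i : ℝ)) ∈ affineSpan ℝ P →
      ¬(f (fun i => (p i : ℝ)) < f (fun i => (z i : ℝ)) ∧
        f (fun i => (z i : ℝ)) < f x)

namespace PermAux

open Finset

/-- The vertex `m·(𝟙 - e_j)` of the simplex. -/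
noncomputable def v (m : ℕ) (j : Fin m) : Fin m → ℝ := fun i => if i = j then 0 else m

lemma sum_v (m : ℕ) (j : Fin m) : ∑ i, v m j i = m * ((m : ℝ) - 1) := by
  have h : ∀ i, v m j i = (m : ℝ) - (if i = j then (m : ℝ) else 0) := by
    intro i; simp only [v]; split <;> ring
  rw [Finset.sum_congr rfl fun i _ => h i, Finset.sum_sub_distrib,
    Finset.sum_const, Finset.sum_ite_eq' Finset.univ j fun _ => (m : ℝ)]
  simp only [Finset.card_univ, Fintype.card_fin, nsmul_eq_mul, Finset.mem_univ, if_true]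
  ring

/-- Explicit representation of any point of the hyperplane as an affine combination of
the vertices. -/
lemma reprr (m : ℕ) (hm : 0 < m) (u : Fin m → ℝ)
    (hu : ∑ i, u i = m * ((m : ℝ) - 1)) :
    ∑ j, (((m : ℝ) - u j) / m) • v m j = u := by
  have hm' : (m : ℝ) ≠ 0 := Nat.cast_ne_zero.mpr hm.ne'
  funext i
  rw [Finset.sum_apply]
  have h1 : ∀ j, ((((m : ℝ) - u j) / m) • v m j) i
      = ((m : ℝ) - u j) - (if i = j then ((m : ℝ) - u j) else 0) := by
    intro j
    simp only [Pi.smul_apply, smul_eq_mul, v]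
    by_cases h : i = j <;> simp only [h, if_true, if_false] <;> field_simp <;> ring
  rw [Finset.sum_congr rfl fun j _ => h1 j, Finset.sum_sub_distrib,
    Finset.sum_ite_eq Finset.univ i fun j => (m : ℝ) - u j,
    Finset.sum_sub_distrib, Finset.sum_const, hu]
  simp only [Finset.card_univ, Fintype.card_fin, nsmul_eq_mul, Finset.mem_univ, if_true]
  ring

lemma sum_w (m : ℕ) (hm : 0 < m) {u : Fin m → ℝ}
    (hu : ∑ i, u i = m * ((m : ℝ) - 1)) :
    ∑ j, ((m : ℝ) - u j) / m = 1 := by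
  have hm' : (m : ℝ) ≠ 0 := Nat.cast_ne_zero.mpr hm.ne'
  rw [← Finset.sum_div, Finset.sum_sub_distrib, Finset.sum_const, hu]
  simp only [Finset.card_univ, Fintype.card_fin, nsmul_eq_mul]
  field_simp
  ring

/-- The explicit description of the polytope. -/
def Sdesc (m : ℕ) : Set (Fin m → ℝ) :=
  {x | ∑ i, x i = m * ((m : ℝ) - 1) ∧ ∀ i, x i ≤ m}

lemma v_mem (m : ℕ) (j : Fin m) : v m j ∈ Sdesc m := by
  refine ⟨sum_v m j, fun i => ?_⟩
  simp only [v]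
  split
  · positivity
  · exact le_rfl

lemma convex_Sdesc (m : ℕ) : Convex ℝ (Sdesc m) := by
  intro x hx y hy a b ha hb hab
  constructor
  · have h : ∑ i, (a • x + b • y) i = a * ∑ i, x i + b * ∑ i, y i := by
      simp only [Pi.add_apply, Pi.smul_apply, smul_eq_mul, Finset.sum_add_distrib,
        Finset.mul_sum]
    rw [h, hx.1, hy.1]
    linear_combination (m * ((m : ℝ) - 1)) * hab
  · intro i
    have h : (a • x + b • y) i = a * x i + b * y i := rfl
    rw [h]
    have h1 : a * x i ≤ a * m := mul_le_mul_of_nonneg_left (hx.2 i) ha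
    have h2 : b * y i ≤ b * m := mul_le_mul_of_nonneg_left (hy.2 i) hb
    nlinarith

lemma hull_eq (m : ℕ) (hm : 2 ≤ m) :
    convexHull ℝ (Set.range (v m)) = Sdesc m := by
  have hm0 : (0 : ℝ) < m := by
    have : (2 : ℝ) ≤ m := by exact_mod_cast hm
    linarith
  apply Set.Subset.antisymm
  · exact convexHull_min (by rintro x ⟨j, rfl⟩; exact v_mem m j) (convex_Sdesc m)
  · intro x hx
    have hw0 : ∀ j ∈ Finset.univ, (0 : ℝ) ≤ ((m : ℝ) - x j) / m :=
      fun j _ => div_nonneg (by linarith [hx.2 j]) hm0.le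
    have hw1 : ∑ j, ((m : ℝ) - x j) / m = 1 := sum_w m (by omega) hx.1
    have hcm := Finset.centerMass_mem_convexHull (Finset.univ) hw0
      (by rw [hw1]; norm_num) (fun j _ => Set.mem_range_self (f := v m) j)
    rwa [Finset.centerMass_eq_of_sum_1 _ _ hw1, reprr m (by omega) x hx.1] at hcm

lemma permPoly_eq (m : ℕ) (hm : 2 ≤ m) :
    permPoly m (fun i => if i.1 < m - 1 then m else 0) = Sdesc m := by
  have hgens : {x : Fin m → ℝ | ∃ σ : Equiv.Perm (Fin m),
      x = fun i => (((fun i : Fin m => if i.1 < m - 1 then m else 0) (σ i) : ℕ) : ℝ)}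
      = Set.range (v m) := by
    have hlast : m - 1 < m := by omega
    set last : Fin m := ⟨m - 1, hlast⟩ with hlastdef
    ext x
    simp only [Set.mem_setOf_eq, Set.mem_range]
    constructor
    · rintro ⟨σ, rfl⟩
      refine ⟨σ.symm last, ?_⟩
      funext i
      simp only [v]
      by_cases h : (σ i).1 < m - 1
      · have h2 : σ i ≠ last := by
          intro he
          rw [he] at h
          simp [hlastdef] at h
        have h3 : i ≠ σ.symm last := by
          intro he
          apply h2
          rw [he, Equiv.apply_symm_apply]
        simp [h, h3]
      · have h2 : (σ i).1 = m - 1 := by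
          have := (σ i).isLt
          omega
        have h3 : σ i = last := Fin.ext h2
        have h4 : i = σ.symm last := by
          rw [← h3, Equiv.symm_apply_apply]
        simp [h, h4, hlastdef]
    · rintro ⟨j, rfl⟩
      refine ⟨Equiv.swap j last, ?_⟩
      funext i
      simp only [v]
      by_cases hij : i = j
      · subst hij
        rw [Equiv.swap_apply_left]
        simp [hlastdef]
      · by_cases hil : i = last
        · subst hil
          have hjl : j ≠ last := fun h => hij h.symm
          rw [Equiv.swap_apply_right]
          have : j.1 < m - 1 := by
            have h1 : j.1 ≠ m - 1 := fun h => hjl (Fin.ext h)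
            have := j.isLt
            omega
          simp [hij, this]
        · rw [Equiv.swap_apply_of_ne_of_ne hij hil]
          have : i.1 < m - 1 := by
            have h1 : i.1 ≠ m - 1 := fun h => hil (Fin.ext h)
            have := i.isLt
            omega
          simp [hij, this]
  rw [permPoly, hgens, hull_eq m hm]

lemma sum_of_mem_affineSpan (m : ℕ) {y : Fin m → ℝ}
    (hy : y ∈ affineSpan ℝ (Sdesc m)) : ∑ i, y i = m * ((m : ℝ) - 1) := by
  set sumL : (Fin m → ℝ) →ₗ[ℝ] ℝ := ∑ i, LinearMap.proj i with hsumL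
  have happ : ∀ u : Fin m → ℝ, sumL u = ∑ i, u i := by
    intro u
    rw [hsumL]
    simp [LinearMap.sum_apply, LinearMap.proj_apply]
  set p0 : Fin m → ℝ := fun _ => (m : ℝ) - 1 with hp0
  have hp0sum : ∑ i, p0 i = m * ((m : ℝ) - 1) := by
    simp only [hp0, Finset.sum_const, Finset.card_univ, Fintype.card_fin, nsmul_eq_mul]
  set Q : AffineSubspace ℝ (Fin m → ℝ) := AffineSubspace.mk' p0 (LinearMap.ker sumL)
    with hQ
  have hsub : Sdesc m ⊆ Q := by
    intro u hu
    rw [hQ]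
    rw [SetLike.mem_coe]
    show u ∈ AffineSubspace.mk' p0 (LinearMap.ker sumL)
    rw [AffineSubspace.mem_mk', LinearMap.mem_ker]
    have : u -ᵥ p0 = u - p0 := rfl
    rw [this, map_sub, happ, happ, hu.1, hp0sum, sub_self]
  have hyQ : y ∈ Q := affineSpan_le.mpr hsub hy
  rw [hQ, AffineSubspace.mem_mk', LinearMap.mem_ker] at hyQ
  have : y -ᵥ p0 = y - p0 := rfl
  rw [this, map_sub, happ, happ, hp0sum] at hyQ
  linarith

lemma affineIndep (m : ℕ) (hm : 2 ≤ m) : AffineIndependent ℝ (v m) := by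
  have hm' : (m : ℝ) ≠ 0 := by
    have : (0:ℕ) < m := by omega
    exact Nat.cast_ne_zero.mpr this.ne'
  rw [affineIndependent_iff]
  intro s w hsum hzero e he
  have hc := congrFun hzero e
  rw [Finset.sum_apply, Pi.zero_apply] at hc
  have h1 : ∀ j ∈ s, (w j • v m j) e = w j * m - (if e = j then w j * m else 0) := by
    intro j _
    simp only [Pi.smul_apply, smul_eq_mul, v]
    by_cases h : e = j <;> simp [h]
  rw [Finset.sum_congr rfl h1, Finset.sum_sub_distrib, ← Finset.sum_mul, hsum,
    Finset.sum_ite_eq s e fun j => w j * m, if_pos he, zero_mul, zero_sub,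
    neg_eq_zero] at hc
  exact (mul_eq_zero.mp hc).resolve_right hm'

lemma finrank_P (m : ℕ) (hm : 2 ≤ m) :
    Module.finrank ℝ ↥(vectorSpan ℝ (Sdesc m)) = m - 1 := by
  have h1 : vectorSpan ℝ (Sdesc m) = vectorSpan ℝ (Set.range (v m)) := by
    rw [← direction_affineSpan, ← direction_affineSpan, ← hull_eq m hm,
      affineSpan_convexHull]
  rw [h1]
  exact (affineIndep m hm).finrank_vectorSpan (by rw [Fintype.card_fin]; omega)

end PermAux

open PermAux Finset

/-- For `m ≥ 2` and `λ = (m, ..., m, 0)` (with `m − 1` parts equal to `m`), the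
`λ`-permutohedron `P_λ^m` is reflexive: `(m−1, ..., m−1)` is its unique relative
interior lattice point and it is at lattice distance 1 from each facet. -/
theorem permutohedron_mm0_reflexive (m : ℕ) (hm : 2 ≤ m) :
    ReflexivePolytope m (permPoly m (fun i => if i.1 < m - 1 then m else 0))
      (fun _ => (m : ℤ) - 1) := by
  classical
  have hm0 : (0 : ℝ) < m := by
    have : (2 : ℝ) ≤ m := by exact_mod_cast hm
    linarith
  have hmr2 : (2 : ℝ) ≤ m := by exact_mod_cast hm
  unfold ReflexivePolytope
  rw [permPoly_eq m hm]
  have hpeq : (fun i : Fin m => (((fun _ : Fin m => (m : ℤ) - 1) i : ℤ) : ℝ))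
      = fun _ : Fin m => (m : ℝ) - 1 := by
    funext i
    push_cast
    ring
  rw [hpeq]
  have hp0sum : ∑ i : Fin m, ((m : ℝ) - 1) = m * ((m : ℝ) - 1) := by
    simp only [Finset.sum_const, Finset.card_univ, Fintype.card_fin, nsmul_eq_mul]
  refine ⟨?_, ?_, ?_⟩
  · -- p is in the intrinsic interior
    have hpP : (fun _ : Fin m => (m : ℝ) - 1) ∈ Sdesc m := by
      refine ⟨hp0sum, fun i => ?_⟩
      show (m : ℝ) - 1 ≤ m
      linarith
    have hpA : (fun _ : Fin m => (m : ℝ) - 1) ∈ affineSpan ℝ (Sdesc m) :=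
      mem_affineSpan ℝ hpP
    refine ⟨⟨_, hpA⟩, ?_, rfl⟩
    have hsub : (Subtype.val ⁻¹' Metric.ball (fun _ : Fin m => (m : ℝ) - 1) (1/2) :
        Set (affineSpan ℝ (Sdesc m))) ⊆ Subtype.val ⁻¹' Sdesc m := by
      intro y hy
      have hysum := sum_of_mem_affineSpan m y.2
      refine ⟨hysum, fun i => ?_⟩
      have hd := dist_le_pi_dist (y : Fin m → ℝ) (fun _ : Fin m => (m : ℝ) - 1) i
      have hb : dist (y : Fin m → ℝ) (fun _ : Fin m => (m : ℝ) - 1) < 1/2 :=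
        Metric.mem_ball.mp hy
      rw [Real.dist_eq] at hd
      have := abs_lt.mp (lt_of_le_of_lt hd hb)
      have h1 : (y : Fin m → ℝ) i - ((m : ℝ) - 1) < 1/2 := this.2
      linarith
    exact interior_maximal hsub
      (Metric.isOpen_ball.preimage continuous_subtype_val)
      (by simp [Metric.mem_ball])
  · -- uniqueness of the interior lattice point
    intro q hq
    have hqP : (fun i => (q i : ℝ)) ∈ Sdesc m := intrinsicInterior_subset hq
    obtain ⟨x', hx', hvx⟩ := hq
    rw [mem_interior_iff_mem_nhds, Metric.mem_nhds_iff] at hx'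
    obtain ⟨ε, hε, hball⟩ := hx'
    have hne : ∀ i, (q i : ℝ) ≠ m := by
      intro i hqi
      haveI : Nontrivial (Fin m) := Fin.nontrivial_iff_two_le.mpr hm
      obtain ⟨j, hj⟩ := exists_ne i
      set d : Fin m → ℝ := fun k => if k = i then 1 else if k = j then -1 else 0 with hd
      have hdv : (m : ℝ) • d = v m j - v m i := by
        funext k
        simp only [Pi.smul_apply, Pi.sub_apply, smul_eq_mul, hd, v]
        by_cases h1 : k = i
        · have h2 : ¬ k = j := fun h => hj (h.symm.trans h1)
          simp [h1, show ¬ i = j from fun h => hj h.symm]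
        · by_cases h2 : k = j
          · simp [h1, h2, show ¬ j = i from hj]
          · simp [h1, h2]
      have hdmem : d ∈ (affineSpan ℝ (Sdesc m)).direction := by
        rw [direction_affineSpan]
        have h2 : d = (m : ℝ)⁻¹ • ((m : ℝ) • d) := by
          rw [smul_smul, inv_mul_cancel₀ hm0.ne', one_smul]
        rw [h2, hdv]
        have hvs : v m j - v m i ∈ vectorSpan ℝ (Sdesc m) := by
          have := vsub_mem_vectorSpan ℝ (v_mem m j) (v_mem m i)
          exact this
        exact Submodule.smul_mem _ _ hvs
      have hy : (ε/2) • d +ᵥ (x' : Fin m → ℝ) ∈ affineSpan ℝ (Sdesc m) :=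
        AffineSubspace.vadd_mem_of_mem_direction
          (Submodule.smul_mem _ _ hdmem) x'.2
      have hmemball : (⟨_, hy⟩ : affineSpan ℝ (Sdesc m)) ∈ Metric.ball x' ε := by
        rw [Metric.mem_ball, Subtype.dist_eq]
        show dist ((ε/2) • d + (x' : Fin m → ℝ)) (x' : Fin m → ℝ) < ε
        rw [dist_eq_norm, add_sub_cancel_right, norm_smul, Real.norm_eq_abs,
          abs_of_pos (by linarith)]
        have hdle : ‖d‖ ≤ 1 := by
          rw [pi_norm_le_iff_of_nonneg zero_le_one]
          intro k
          simp only [hd, Real.norm_eq_abs]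
          by_cases h1 : k = i
          · simp [h1]
          · by_cases h2 : k = j
            · simp [h1, h2, show ¬ j = i from hj]
            · simp [h1, h2]
        nlinarith [norm_nonneg d]
      have hP2 : ((ε/2) • d +ᵥ (x' : Fin m → ℝ)) ∈ Sdesc m := hball hmemball
      have hle := hP2.2 i
      have hval : ((ε/2) • d +ᵥ (x' : Fin m → ℝ)) i = ε/2 + (q i : ℝ) := by
        have hdi : d i = 1 := by simp [hd]
        show ((ε/2) • d + (x' : Fin m → ℝ)) i = ε/2 + (q i : ℝ)
        simp only [Pi.add_apply, Pi.smul_apply, smul_eq_mul, hdi, hvx]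
        ring
      rw [hval, hqi] at hle
      linarith
    have hle : ∀ i, q i ≤ (m : ℤ) - 1 := by
      intro i
      have h1 : (q i : ℝ) < m := lt_of_le_of_ne (hqP.2 i) (hne i)
      have h2 : q i < (m : ℤ) := by exact_mod_cast h1
      omega
    have hsq : ∑ i, q i = (m : ℤ) * ((m : ℤ) - 1) := by
      have h1 := hqP.1
      have h2 : ((∑ i, q i : ℤ) : ℝ) = ((m * ((m : ℤ) - 1) : ℤ) : ℝ) := by
        push_cast
        simpa using h1
      exact_mod_cast h2
    funext i
    by_contra hne2
    have hlt : q i < (m : ℤ) - 1 := lt_of_le_of_ne (hle i) hne2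
    have hstrict : ∑ j, q j < ∑ _j : Fin m, ((m : ℤ) - 1) :=
      Finset.sum_lt_sum (fun j _ => hle j) ⟨i, Finset.mem_univ i, hlt⟩
    rw [hsq, Finset.sum_const, Finset.card_univ, Fintype.card_fin, nsmul_eq_mul] at hstrict
    linarith
  · -- the facet condition
    intro f F hFne hFdef hdimF x hxF z hzA
    rintro ⟨h1, h2⟩
    haveI : Nonempty (Fin m) := ⟨⟨0, by omega⟩⟩
    set M : ℝ := Finset.univ.sup' Finset.univ_nonempty (fun j => f (v m j)) with hM
    have hfle : ∀ j, f (v m j) ≤ M := by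
      intro j
      rw [hM]
      exact Finset.le_sup' (fun j => f (v m j)) (Finset.mem_univ j)
    obtain ⟨j0, -, hj0⟩ := Finset.exists_mem_eq_sup' Finset.univ_nonempty
      (fun j => f (v m j))
    rw [← hM] at hj0
    set A : Finset (Fin m) := Finset.univ.filter (fun j => f (v m j) = M) with hA
    have hj0A : j0 ∈ A := by simp [hA, ← hj0]
    have hfPle : ∀ y ∈ Sdesc m, f y ≤ M := by
      intro y hy
      rw [← hull_eq m hm] at hy
      exact convexHull_min (by rintro t ⟨j, rfl⟩; exact hfle j)
        (convex_halfSpace_le f.isLinear M) hy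
    have hxF' : x ∈ {u ∈ Sdesc m | ∀ y ∈ Sdesc m, f y ≤ f u} := hFdef ▸ hxF
    have hxP : x ∈ Sdesc m := hxF'.1
    have hfx : f x = M :=
      le_antisymm (hfPle x hxP) (hj0 ▸ hxF'.2 (v m j0) (v_mem m j0))
    have hFeq : F = {u ∈ Sdesc m | M ≤ f u} := by
      rw [hFdef]
      ext u
      simp only [Set.mem_setOf_eq]
      constructor
      · rintro ⟨hu1, hu2⟩
        exact ⟨hu1, hj0 ▸ hu2 (v m j0) (v_mem m j0)⟩
      · rintro ⟨hu1, hu2⟩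
        exact ⟨hu1, fun y hy => (hfPle y hy).trans hu2⟩
    set SA : Set (Fin m → ℝ) := v m '' ↑A with hSA
    have hFhull : F = convexHull ℝ SA := by
      apply Set.Subset.antisymm
      · intro u hu
        rw [hFeq] at hu
        obtain ⟨huP, huM⟩ := hu
        have hfu : f u = M := le_antisymm (hfPle u huP) huM
        set w : Fin m → ℝ := fun j => ((m : ℝ) - u j) / m with hw
        have hw0 : ∀ j, 0 ≤ w j :=
          fun j => div_nonneg (by linarith [huP.2 j]) hm0.le
        have hw1 : ∑ j, w j = 1 := sum_w m (by omega) huP.1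
        have hrep : ∑ j, w j • v m j = u := reprr m (by omega) u huP.1
        have hfsum : ∑ j, w j * f (v m j) = M := by
          have hc := congrArg f hrep
          rw [map_sum] at hc
          simp only [map_smul, smul_eq_mul] at hc
          rw [hc, hfu]
        have hkey : ∀ j, w j * (M - f (v m j)) = 0 := by
          have hsz : ∑ j, w j * (M - f (v m j)) = 0 := by
            have hsplit : ∑ j, w j * (M - f (v m j))
                = (∑ j, w j) * M - ∑ j, w j * f (v m j) := by
              rw [Finset.sum_mul, ← Finset.sum_sub_distrib]
              exact Finset.sum_congr rfl fun j _ => by ring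
            rw [hsplit, hw1, hfsum]
            ring
          intro j
          exact (Finset.sum_eq_zero_iff_of_nonneg
            (fun j _ => mul_nonneg (hw0 j) (sub_nonneg.mpr (hfle j)))).mp hsz j
            (Finset.mem_univ j)
        have hwA : ∀ j ∉ A, w j = 0 := by
          intro j hj
          have hne' : f (v m j) ≠ M := by simpa [hA] using hj
          have hlt : f (v m j) < M := lt_of_le_of_ne (hfle j) hne'
          rcases mul_eq_zero.mp (hkey j) with h | h
          · exact h
          · linarith
        have hwA1 : ∑ j ∈ A, w j = 1 := by
          rw [Finset.sum_subset (Finset.subset_univ A)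
            (fun j _ hj => hwA j hj)]
          exact hw1
        have hconv := Finset.centerMass_mem_convexHull A
          (fun j _ => hw0 j) (by rw [hwA1]; norm_num)
          (fun j hj => Set.mem_image_of_mem (v m) (Finset.mem_coe.mpr hj))
        rwa [Finset.centerMass_eq_of_sum_1 _ _ hwA1,
          Finset.sum_subset (Finset.subset_univ A)
            (fun j _ hj => by rw [hwA j hj, zero_smul]), hrep] at hconv
      · apply convexHull_min
        · rintro t ⟨j, hjA, rfl⟩
          rw [hFeq]
          refine ⟨v_mem m j, ?_⟩
          have hjA' : f (v m j) = M := by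
            have : j ∈ A := hjA
            simpa [hA] using this
          exact le_of_eq hjA'.symm
        · rw [hFeq]
          have hsep : {u ∈ Sdesc m | M ≤ f u} = Sdesc m ∩ {u | M ≤ f u} := rfl
          rw [hsep]
          exact (convex_Sdesc m).inter (convex_halfSpace_ge f.isLinear M)
    have hVF : vectorSpan ℝ F = vectorSpan ℝ SA := by
      rw [← direction_affineSpan, ← direction_affineSpan, hFhull, affineSpan_convexHull]
    have hA1 : 1 ≤ A.card := Finset.card_pos.mpr ⟨j0, hj0A⟩
    have hfr : Module.finrank ℝ ↥(vectorSpan ℝ SA) = A.card - 1 := by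
      have hai : AffineIndependent ℝ (fun t : ↥(↑A : Set (Fin m)) => v m ↑t) :=
        (affineIndep m hm).comp_embedding (Function.Embedding.subtype _)
      have himg : SA = Set.range (fun t : ↥(↑A : Set (Fin m)) => v m ↑t) :=
        Set.image_eq_range _ _
      rw [himg]
      refine hai.finrank_vectorSpan ?_
      have hcard : Fintype.card ↥(↑A : Set (Fin m)) = A.card := by
        simp [Fintype.card_coe]
      rw [hcard]
      omega
    have hAcard : A.card = m - 1 := by
      rw [hVF, hfr, finrank_P m hm] at hdimF
      omega
    obtain ⟨i, hi⟩ := Finset.card_eq_one.mp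
      (show Aᶜ.card = 1 by
        rw [Finset.card_compl, Fintype.card_fin, hAcard]
        omega)
    have hiA : i ∉ A := by
      have h : i ∈ Aᶜ := hi ▸ Finset.mem_singleton_self i
      simpa [Finset.mem_compl] using h
    have hmemA : ∀ k, k ≠ i → k ∈ A := by
      intro k hk
      by_contra hkA
      have h : k ∈ Aᶜ := Finset.mem_compl.mpr hkA
      rw [hi, Finset.mem_singleton] at h
      exact hk h
    set c : Fin m → ℝ := fun k => f (fun l => if k = l then 1 else 0) with hc
    have hfc : ∀ u : Fin m → ℝ, f u = ∑ k, u k * c k := by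
      intro u
      conv_lhs => rw [pi_eq_sum_univ u]
      rw [map_sum]
      simp only [map_smul, smul_eq_mul]
      rfl
    have hfv : ∀ j, f (v m j) = (m : ℝ) * (∑ k, c k) - (m : ℝ) * c j := by
      intro j
      rw [hfc]
      have h : ∀ k, v m j k * c k = (m : ℝ) * c k - (if k = j then (m : ℝ) * c k else 0) := by
        intro k
        simp only [v]
        by_cases hkj : k = j <;> simp [hkj]
      rw [Finset.sum_congr rfl fun k _ => h k, Finset.sum_sub_distrib, ← Finset.mul_sum,
        Finset.sum_ite_eq' Finset.univ j fun k => (m : ℝ) * c k, if_pos (Finset.mem_univ j)]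
    set cA : ℝ := ((m : ℝ) * (∑ k, c k) - M) / m with hcA
    have hcAval : ∀ j ∈ A, c j = cA := by
      intro j hj
      have hjM : f (v m j) = M := by simpa [hA] using hj
      rw [hfv] at hjM
      rw [hcA]
      field_simp
      linarith
    have hciA : cA < c i := by
      have hltM : f (v m i) < M :=
        lt_of_le_of_ne (hfle i) (by simpa [hA] using hiA)
      rw [hfv] at hltM
      rw [hcA, div_lt_iff₀ hm0]
      linarith
    have hkeyf : ∀ u : Fin m → ℝ, ∑ k, u k = (m : ℝ) * ((m : ℝ) - 1) →
        f u = cA * ((m : ℝ) * ((m : ℝ) - 1)) + (c i - cA) * u i := by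
      intro u hu
      rw [hfc]
      have h : ∀ k, u k * c k = u k * cA + (if k = i then u k * (c i - cA) else 0) := by
        intro k
        by_cases hki : k = i
        · simp only [hki, eq_self_iff_true, if_true]
          ring
        · have hck := hcAval k (hmemA k hki)
          rw [if_neg hki, hck, add_zero]
      rw [Finset.sum_congr rfl fun k _ => h k, Finset.sum_add_distrib, ← Finset.sum_mul, hu,
        Finset.sum_ite_eq' Finset.univ i fun k => u k * (c i - cA),
        if_pos (Finset.mem_univ i)]
      ring
    have hsz : ∑ k, ((z k : ℝ)) = (m : ℝ) * ((m : ℝ) - 1) := by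
      have := sum_of_mem_affineSpan m hzA
      simpa using this
    have hfp : f (fun _ : Fin m => (m : ℝ) - 1)
        = cA * ((m : ℝ) * ((m : ℝ) - 1)) + (c i - cA) * ((m : ℝ) - 1) := by
      simpa using hkeyf (fun _ : Fin m => (m : ℝ) - 1) hp0sum
    have hfz : f (fun k => (z k : ℝ))
        = cA * ((m : ℝ) * ((m : ℝ) - 1)) + (c i - cA) * (z i : ℝ) := by
      simpa using hkeyf (fun k => (z k : ℝ)) hsz
    have hij0 : i ≠ j0 := fun h => hiA (h ▸ hj0A)
    have hvj0i : v m j0 i = m := by simp [v, hij0]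
    have hfj0 : f (v m j0)
        = cA * ((m : ℝ) * ((m : ℝ) - 1)) + (c i - cA) * m := by
      have := hkeyf (v m j0) (sum_v m j0)
      rwa [hvj0i] at this
    have hfxM : f x = cA * ((m : ℝ) * ((m : ℝ) - 1)) + (c i - cA) * m := by
      rw [hfx, hj0, hfj0]
    rw [hfp, hfz] at h1
    rw [hfz, hfxM] at h2
    have hpos : 0 < c i - cA := sub_pos.mpr hciA
    have hz1 : (m : ℝ) - 1 < (z i : ℝ) :=
      (mul_lt_mul_iff_right₀ hpos).mp (by linarith)
    have hz2 : (z i : ℝ) < m :=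
      (mul_lt_mul_iff_right₀ hpos).mp (by linarith)
    have hz1' : (m : ℤ) - 1 < z i := by exact_mod_cast hz1
    have hz2' : z i < (m : ℤ) := by exact_mod_cast hz2
    omega
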